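/- Let R = K[x_1,...,x_n, y_1,...,y_n], w_1,...,w_n positive integers, and for 1 ≤ s ≤ n-1 let Q_{s-1} = I_{n-1} + (x_n x_1 y_1^{w_1}, ..., x_n x_{s-1} y_{s-1}^{w_{s-1}}), where I_{n-1} = (x_i y_j^{w_j} : 1 ≤ i,j ≤ n-1, i ≠ j). Then the colon ideal Q_{s-1} : (x_n x_s y_s^{w_s}) equals (x_1,...,x_{s-1}, x_{s+1},...,x_{n-1}, y_1^{w_1},...,y_{s-1}^{w_{s-1}}, y_{s+1}^{w_{s+1}},...,y_{n-1}^{w_{n-1}}). -/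

import Mathlib

open MvPolynomial

section Aux

variable {K : Type} [Field K] (n : ℕ)

private abbrev σn (n : ℕ) := Fin (n + 1) ⊕ Fin (n + 1)

private lemma aux_XX (a b : σn n) (k : ℕ) :
    (X a * X b ^ k : MvPolynomial (σn n) K) =
      monomial (Finsupp.single a 1 + Finsupp.single b k) 1 := by
  rw [X_pow_eq_monomial]
  rw [show (X a : MvPolynomial (σn n) K) = monomial (Finsupp.single a 1) 1 from rfl]
  rw [monomial_mul, one_mul]

private lemma aux_XXX (a b c : σn n) (k : ℕ) :
    (X a * X b * X c ^ k : MvPolynomial (σn n) K) =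
      monomial (Finsupp.single a 1 + Finsupp.single b 1 + Finsupp.single c k) 1 := by
  rw [X_pow_eq_monomial]
  rw [show (X a : MvPolynomial (σn n) K) = monomial (Finsupp.single a 1) 1 from rfl]
  rw [show (X b : MvPolynomial (σn n) K) = monomial (Finsupp.single b 1) 1 from rfl]
  rw [monomial_mul, monomial_mul, one_mul, one_mul]

/-- membership of `f * monomial u 1` in a monomial ideal. -/
private lemma aux_mul_monomial_mem (f : MvPolynomial (σn n) K) (u : σn n →₀ ℕ)
    (D : Set (σn n →₀ ℕ)) :
    f * monomial u 1 ∈ Ideal.span ((fun d => monomial d (1 : K)) '' D) ↔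
      ∀ e ∈ f.support, ∃ g ∈ D, g ≤ e + u := by
  rw [mem_ideal_span_monomial_image]
  have hsupp : ∀ e' : σn n →₀ ℕ, e' ∈ (f * monomial u 1).support ↔
      u ≤ e' ∧ e' - u ∈ f.support := by
    intro e'
    simp only [mem_support_iff, coeff_mul_monomial', mul_one]
    split_ifs with h
    · simp [h]
    · simp [h]
  constructor
  · intro h e he
    exact h (e + u) (by rw [hsupp]; exact ⟨le_add_self, by rwa [add_tsub_cancel_right]⟩)
  · intro h e' he'
    rw [hsupp] at he'
    obtain ⟨g, hg, hle⟩ := h _ he'.2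
    rw [tsub_add_cancel_of_le he'.1] at hle
    exact ⟨g, hg, hle⟩

end Aux

/-- In `R = K[x_1,…,x_n, y_1,…,y_n]` (variables indexed by `Fin (n+1) ⊕ Fin (n+1)`),
with `Q_{s-1} = I_{n-1} + (x_n x_1 y_1^{w_1},…,x_n x_{s-1} y_{s-1}^{w_{s-1}})`, the colon
ideal `Q_{s-1} : (x_n x_s y_s^{w_s})` equals
`(x_i : i ≤ n-1, i ≠ s) + (y_j^{w_j} : j ≤ n-1, j ≠ s)`. -/
theorem stmt5 {K : Type} [Field K] (n : ℕ) (w : Fin (n + 1) → ℕ) (hw : ∀ j, 1 ≤ w j)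
    (s : Fin n) (I Q : Ideal (MvPolynomial (Fin (n + 1) ⊕ Fin (n + 1)) K))
    (hI : I = Ideal.span {p | ∃ i j : Fin n, i ≠ j ∧
      p = X (Sum.inl i.castSucc) * X (Sum.inr j.castSucc) ^ w j.castSucc})
    (hQ : Q = I + Ideal.span {p | ∃ j : Fin n, j < s ∧
      p = X (Sum.inl (Fin.last n)) * X (Sum.inl j.castSucc) *
        X (Sum.inr j.castSucc) ^ w j.castSucc}) :
    Q.colon ((Ideal.span {X (Sum.inl (Fin.last n)) * X (Sum.inl s.castSucc) *
        X (Sum.inr s.castSucc) ^ w s.castSucc} :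
          Ideal (MvPolynomial (Fin (n + 1) ⊕ Fin (n + 1)) K)) :
            Set (MvPolynomial (Fin (n + 1) ⊕ Fin (n + 1)) K)) =
      Ideal.span ({p | ∃ i : Fin n, i ≠ s ∧ p = X (Sum.inl i.castSucc)} ∪
        {p | ∃ j : Fin n, j ≠ s ∧ p = X (Sum.inr j.castSucc) ^ w j.castSucc}) := by
  classical
  subst hI hQ
  set D : Set (Fin (n + 1) ⊕ Fin (n + 1) →₀ ℕ) :=
    {d | ∃ i j : Fin n, i ≠ j ∧
        d = Finsupp.single (Sum.inl i.castSucc) 1 +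
          Finsupp.single (Sum.inr j.castSucc) (w j.castSucc)} ∪
    {d | ∃ j : Fin n, j < s ∧
        d = Finsupp.single (Sum.inl (Fin.last n)) 1 +
          Finsupp.single (Sum.inl j.castSucc) 1 +
          Finsupp.single (Sum.inr j.castSucc) (w j.castSucc)} with hD
  set E : Set (Fin (n + 1) ⊕ Fin (n + 1) →₀ ℕ) :=
    {d | ∃ i : Fin n, i ≠ s ∧ d = Finsupp.single (Sum.inl i.castSucc) 1} ∪
    {d | ∃ j : Fin n, j ≠ s ∧
        d = Finsupp.single (Sum.inr j.castSucc) (w j.castSucc)} with hE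
  set u : Fin (n + 1) ⊕ Fin (n + 1) →₀ ℕ :=
    Finsupp.single (Sum.inl (Fin.last n)) 1 +
      Finsupp.single (Sum.inl s.castSucc) 1 +
      Finsupp.single (Sum.inr s.castSucc) (w s.castSucc) with hu
  have hQD : (Ideal.span {p | ∃ i j : Fin n, i ≠ j ∧
        p = X (Sum.inl i.castSucc) * X (Sum.inr j.castSucc) ^ w j.castSucc}
      + Ideal.span {p | ∃ j : Fin n, j < s ∧
        p = X (Sum.inl (Fin.last n)) * X (Sum.inl j.castSucc) *
          X (Sum.inr j.castSucc) ^ w j.castSucc}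
      : Ideal (MvPolynomial (Fin (n + 1) ⊕ Fin (n + 1)) K)) =
      Ideal.span ((fun d => monomial d (1 : K)) '' D) := by
    rw [Ideal.add_eq_sup, ← Ideal.span_union]
    congr 1
    rw [hD, Set.image_union]
    congr 1
    · ext p
      constructor
      · rintro ⟨i, j, hij, rfl⟩
        exact ⟨_, ⟨i, j, hij, rfl⟩, (aux_XX n _ _ _).symm⟩
      · rintro ⟨d, ⟨i, j, hij, rfl⟩, rfl⟩
        exact ⟨i, j, hij, (aux_XX n _ _ _).symm⟩
    · ext p
      constructor
      · rintro ⟨j, hj, rfl⟩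
        exact ⟨_, ⟨j, hj, rfl⟩, (aux_XXX n _ _ _ _).symm⟩
      · rintro ⟨d, ⟨j, hj, rfl⟩, rfl⟩
        exact ⟨j, hj, (aux_XXX n _ _ _ _).symm⟩
  have hED : ({p | ∃ i : Fin n, i ≠ s ∧ p = X (Sum.inl i.castSucc)} ∪
        {p | ∃ j : Fin n, j ≠ s ∧ p = X (Sum.inr j.castSucc) ^ w j.castSucc}
      : Set (MvPolynomial (Fin (n + 1) ⊕ Fin (n + 1)) K)) =
      (fun d => monomial d (1 : K)) '' E := by
    rw [hE, Set.image_union]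
    congr 1
    · ext p
      constructor
      · rintro ⟨i, hi, rfl⟩
        exact ⟨_, ⟨i, hi, rfl⟩, rfl⟩
      · rintro ⟨d, ⟨i, hi, rfl⟩, rfl⟩
        exact ⟨i, hi, rfl⟩
    · ext p
      constructor
      · rintro ⟨j, hj, rfl⟩
        exact ⟨_, ⟨j, hj, rfl⟩, X_pow_eq_monomial.symm⟩
      · rintro ⟨d, ⟨j, hj, rfl⟩, rfl⟩
        exact ⟨j, hj, X_pow_eq_monomial.symm⟩
  rw [hQD, hED]
  ext f
  rw [Ideal.mem_colon_span_singleton, aux_XXX n, ← hu, aux_mul_monomial_mem,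
    mem_ideal_span_monomial_image]
  -- value facts about u
  have huinl : ∀ i : Fin n, i ≠ s → u (Sum.inl i.castSucc) = 0 := by
    intro i hi
    rw [hu]
    simp [Finsupp.single_apply, (Fin.castSucc_lt_last i).ne', Fin.castSucc_inj, hi, Ne.symm hi]
  have huinr : ∀ j : Fin n, j ≠ s → u (Sum.inr j.castSucc) = 0 := by
    intro j hj
    rw [hu]
    simp [Finsupp.single_apply, Fin.castSucc_inj, hj, Ne.symm hj]
  have hsu : Finsupp.single (Sum.inl s.castSucc) (1:ℕ) ≤ u := by
    rw [hu]; exact le_add_self.trans le_self_add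
  have hwu : Finsupp.single (Sum.inr s.castSucc) (w s.castSucc) ≤ u := by
    rw [hu]; exact le_add_self
  constructor
  · -- colon ⊆ RHS
    intro h e he
    obtain ⟨g, hg, hle⟩ := h e he
    rcases hg with ⟨i, j, hij, rfl⟩ | ⟨j, hjs, rfl⟩
    · by_cases hi : i = s
      · have hj : j ≠ s := fun h => hij (h ▸ hi)
        refine ⟨_, Or.inr ⟨j, hj, rfl⟩, Finsupp.single_le_iff.mpr ?_⟩
        have h1 := Finsupp.le_def.mp hle (Sum.inr j.castSucc)
        simp only [Finsupp.add_apply] at h1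
        rw [huinr j hj, add_zero] at h1
        simpa [Finsupp.single_apply] using h1
      · refine ⟨_, Or.inl ⟨i, hi, rfl⟩, Finsupp.single_le_iff.mpr ?_⟩
        have h1 := Finsupp.le_def.mp hle (Sum.inl i.castSucc)
        simp only [Finsupp.add_apply] at h1
        rw [huinl i hi, add_zero] at h1
        simpa [Finsupp.single_apply] using h1
    · have hj : j ≠ s := hjs.ne
      refine ⟨_, Or.inl ⟨j, hj, rfl⟩, Finsupp.single_le_iff.mpr ?_⟩
      have h1 := Finsupp.le_def.mp hle (Sum.inl j.castSucc)
      simp only [Finsupp.add_apply] at h1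
      rw [huinl j hj, add_zero] at h1
      simpa [Finsupp.single_apply, Finsupp.add_apply,
        (Fin.castSucc_lt_last j).ne'] using h1
  · -- RHS ⊆ colon
    intro h e he
    obtain ⟨g, hg, hle⟩ := h e he
    rcases hg with ⟨i, hi, rfl⟩ | ⟨j, hj, rfl⟩
    · exact ⟨Finsupp.single (Sum.inl i.castSucc) 1 +
        Finsupp.single (Sum.inr s.castSucc) (w s.castSucc),
        Or.inl ⟨i, s, hi, rfl⟩, add_le_add hle hwu⟩
    · exact ⟨Finsupp.single (Sum.inl s.castSucc) 1 +
        Finsupp.single (Sum.inr j.castSucc) (w j.castSucc),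
        Or.inl ⟨s, j, fun hsj => hj hsj.symm, rfl⟩,
        (add_le_add hsu hle).trans (le_of_eq (add_comm u e))⟩
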